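/- Bloch–Messiah decomposition: Let N be a positive natural number and let S ∈ Sp(2N,ℝ). Then there exist matrices O, O′ ∈ Sp(2N,ℝ) that are also orthogonal (OᵀO = I and O′ᵀO′ = I) and real numbers r₁,…,r_N such that S = O′ · (⊕_{j=1}^N exp(r_j·Z)) · O, where exp(r_j·Z) is the 2×2 diagonal matrix diag(e^{r_j}, e^{−r_j}). -/

import Mathlib

open Matrix Kronecker

/-- The standard symplectic form `Ω = ⊕_{j=1}^N Ω₁` on `ℝ^{2N}`, with the
`2N` coordinates indexed by `Fin N × Fin 2` (mode index, quadrature index). -/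
noncomputable def Omega (N : ℕ) : Matrix (Fin N × Fin 2) (Fin N × Fin 2) ℝ :=
  (1 : Matrix (Fin N) (Fin N) ℝ) ⊗ₖ !![0, 1; -1, 0]

/-- The direct sum of single-mode squeezers `⊕_{j=1}^N exp(r_j Z)`, i.e. the
diagonal matrix with entries `e^{r_j}, e^{-r_j}` in the `j`-th mode. -/
noncomputable def squeezerBlock (N : ℕ) (r : Fin N → ℝ) :
    Matrix (Fin N × Fin 2) (Fin N × Fin 2) ℝ :=
  Matrix.diagonal (fun p => if p.2 = 0 then Real.exp (r p.1) else Real.exp (-(r p.1)))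


lemma bm_fin2cases (k : Fin 2) : k = 0 ∨ k = 1 := by
  fin_cases k
  · exact Or.inl rfl
  · exact Or.inr rfl

open RealInnerProductSpace

lemma omega_apply (N : ℕ) (p q : Fin N × Fin 2) :
    Omega N p q = (if p.1 = q.1 then 1 else 0) * !![0, 1; -1, 0] p.2 q.2 := by
  obtain ⟨p1, p2⟩ := p; obtain ⟨q1, q2⟩ := q
  simp [Omega, Matrix.kroneckerMap_apply, Matrix.one_apply]

lemma omega_mul_transpose (N : ℕ) : Omega N * (Omega N)ᵀ = 1 := by
  ext p q
  rw [Matrix.mul_apply]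
  simp only [Matrix.transpose_apply, omega_apply]
  rw [Fintype.sum_prod_type]
  obtain ⟨p1, p2⟩ := p; obtain ⟨q1, q2⟩ := q
  by_cases h : p1 = q1
  · subst h
    simp only [Matrix.one_apply, Prod.mk.injEq]
    rw [Finset.sum_eq_single p1]
    · fin_cases p2 <;> fin_cases q2 <;>
        simp [Fin.sum_univ_two, Matrix.cons_val_zero, Matrix.cons_val_one]
    · intro b _ hb
      simp [hb, Ne.symm hb]
    · simp
  · simp only [Matrix.one_apply, Prod.mk.injEq, h, false_and, if_false]
    apply Finset.sum_eq_zero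
    intro i _
    by_cases h1 : p1 = i <;> by_cases h2 : q1 = i <;>
      simp_all [h1, h2]

lemma omega_transpose (N : ℕ) : (Omega N)ᵀ = -(Omega N) := by
  ext p q
  obtain ⟨p1, p2⟩ := p; obtain ⟨q1, q2⟩ := q
  simp only [Matrix.transpose_apply, Matrix.neg_apply, omega_apply]
  by_cases h : p1 = q1
  · subst h
    fin_cases p2 <;> fin_cases q2 <;> norm_num
  · simp [h, Ne.symm h]

lemma sq_mul (N : ℕ) (r s : Fin N → ℝ) :
    squeezerBlock N r * squeezerBlock N s = squeezerBlock N (r + s) := by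
  unfold squeezerBlock
  rw [Matrix.diagonal_mul_diagonal, Matrix.diagonal_eq_diagonal_iff]
  intro p
  split_ifs
  · rw [← Real.exp_add]; rfl
  · rw [← Real.exp_add, Pi.add_apply, neg_add]

lemma sq_zero (N : ℕ) : squeezerBlock N 0 = 1 := by
  unfold squeezerBlock
  rw [← Matrix.diagonal_one, Matrix.diagonal_eq_diagonal_iff]
  intro p
  split_ifs <;> simp

lemma sq_transpose (N : ℕ) (r : Fin N → ℝ) :
    (squeezerBlock N r)ᵀ = squeezerBlock N r := Matrix.diagonal_transpose _

lemma sq_symp (N : ℕ) (r : Fin N → ℝ) :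
    squeezerBlock N r * Omega N * (squeezerBlock N r)ᵀ = Omega N := by
  rw [sq_transpose]
  unfold squeezerBlock
  ext p q
  rw [Matrix.mul_diagonal, Matrix.diagonal_mul]
  obtain ⟨p1, p2⟩ := p; obtain ⟨q1, q2⟩ := q
  by_cases h : p1 = q1
  · subst h
    fin_cases p2 <;> fin_cases q2 <;>
      simp [omega_apply, ← Real.exp_add]
  · simp [omega_apply, h]

lemma bm_core : ∀ (n : ℕ) (V : Type) (_ : NormedAddCommGroup V),
    ∀ (_ : @InnerProductSpace ℝ V _ _) (_ : FiniteDimensional ℝ V),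
    Module.finrank ℝ V = 2 * n →
    ∀ (T J : V →ₗ[ℝ] V),
    (∀ x y : V, ⟪T x, y⟫ = ⟪x, T y⟫) →
    (∀ x : V, x ≠ 0 → 0 < ⟪T x, x⟫) →
    (∀ x y : V, ⟪J x, J y⟫ = ⟪x, y⟫) →
    (∀ x : V, J (J x) = -x) →
    (∀ x : V, T (J (T x)) = J x) →
    ∃ (u : Fin n → V) (lam : Fin n → ℝ),
      (∀ j, 0 < lam j) ∧
      (∀ j, T (u j) = lam j • u j) ∧
      (∀ p q : Fin n × Fin 2,
        ⟪(if p.2 = 0 then u p.1 else J (u p.1)),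
          (if q.2 = 0 then u q.1 else J (u q.1))⟫ = if p = q then 1 else 0) := by
  intro n
  induction n with
  | zero =>
    intro V _ _ _ _ T J _ _ _ _ _
    exact ⟨Fin.elim0, Fin.elim0, fun j => j.elim0, fun j => j.elim0, fun p => p.1.elim0⟩
  | succ n ih =>
    intro V _ _ _ hdim T J hTsym hTpos hJo hJ2 hTJT
    -- symmetric operator, get an eigenvector
    have hTsym' : T.IsSymmetric := hTsym
    have hdim' : Module.finrank ℝ V = 2 * (n + 1) := hdim
    set b := hTsym'.eigenvectorBasis hdim' with hb
    have hpos2 : 0 < 2 * (n + 1) := by omega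
    set i0 : Fin (2 * (n + 1)) := ⟨0, hpos2⟩ with hi0
    set u0 : V := b i0 with hu0
    set μ : ℝ := hTsym'.eigenvalues hdim' i0 with hμ
    have hTu0 : T u0 = μ • u0 := hTsym'.apply_eigenvectorBasis hdim' i0
    have hu0norm : ⟪u0, u0⟫ = 1 := by
      rw [real_inner_self_eq_norm_sq, b.orthonormal.1 i0]; norm_num
    have hu0ne : u0 ≠ 0 := by
      intro h; rw [h, inner_zero_left] at hu0norm; norm_num at hu0norm
    have hμpos : 0 < μ := by
      have := hTpos u0 hu0ne
      rw [hTu0, real_inner_smul_left, hu0norm, mul_one] at this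
      exact this
    have hμne : μ ≠ 0 := ne_of_gt hμpos
    set v0 : V := J u0 with hv0
    have hvv : ⟪v0, v0⟫ = 1 := by rw [hv0, hJo]; exact hu0norm
    have huv : ⟪u0, v0⟫ = 0 := by
      have h1 : ⟪J u0, J v0⟫ = ⟪u0, v0⟫ := hJo _ _
      rw [hv0, hJ2, inner_neg_right, real_inner_comm] at h1
      linarith
    have hvu : ⟪v0, u0⟫ = 0 := by rw [real_inner_comm]; exact huv
    have hu0n : ‖u0‖ = 1 := by
      have h := real_inner_self_eq_norm_sq u0; rw [hu0norm] at h; nlinarith [norm_nonneg u0]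
    have hv0n : ‖v0‖ = 1 := by
      have h := real_inner_self_eq_norm_sq v0; rw [hvv] at h; nlinarith [norm_nonneg v0]
    have hTv0 : T v0 = μ⁻¹ • v0 := by
      have h1 := hTJT u0
      rw [hTu0, LinearMap.map_smul, LinearMap.map_smul, ← hv0] at h1
      calc T v0 = μ⁻¹ • (μ • T v0) := by rw [smul_smul, inv_mul_cancel₀ hμne, one_smul]
        _ = μ⁻¹ • v0 := by rw [h1]
    -- the orthogonal complement of span {u0, v0}
    have horthfam : Orthonormal ℝ ![u0, v0] := by
      rw [orthonormal_iff_ite]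
      intro i j
      fin_cases i <;> fin_cases j <;>
        simp [hu0norm, huv, hvu, hvv, hu0n, hv0n]
    set K : Submodule ℝ V := Submodule.span ℝ (Set.range ![u0, v0]) with hK
    have hu0K : u0 ∈ K := Submodule.subset_span ⟨0, rfl⟩
    have hv0K : v0 ∈ K := Submodule.subset_span ⟨1, rfl⟩
    set W : Submodule ℝ V := Kᗮ with hW
    have hKdim : Module.finrank ℝ K = 2 := by
      rw [hK, finrank_span_eq_card horthfam.linearIndependent]
      simp
    have hWdim : Module.finrank ℝ W = 2 * n := by
      have h2 := Submodule.finrank_add_finrank_orthogonal K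
      rw [hKdim, hdim'] at h2
      rw [hW]
      omega
    -- membership criteria
    have hmemW : ∀ x : V, ⟪u0, x⟫ = 0 → ⟪v0, x⟫ = 0 → x ∈ W := by
      intro x h1 h2
      rw [hW, Submodule.mem_orthogonal]
      intro y hy
      induction hy using Submodule.span_induction with
      | mem y hy => obtain ⟨i, rfl⟩ := hy; fin_cases i <;> simpa
      | zero => simp
      | add a b _ _ ha hb => rw [inner_add_left, ha, hb, add_zero]
      | smul c a _ ha => rw [inner_smul_left, ha, mul_zero]
    have hu0W : ∀ x : V, x ∈ W → ⟪u0, x⟫ = 0 := fun x hx =>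
      (Submodule.mem_orthogonal K x).mp hx u0 hu0K
    have hv0W : ∀ x : V, x ∈ W → ⟪v0, x⟫ = 0 := fun x hx =>
      (Submodule.mem_orthogonal K x).mp hx v0 hv0K
    -- invariance
    have hTW : ∀ x ∈ W, T x ∈ W := by
      intro x hx
      refine hmemW _ ?_ ?_
      · rw [← hTsym]; rw [hTu0, real_inner_smul_left, hu0W x hx, mul_zero]
      · rw [← hTsym]; rw [hTv0, real_inner_smul_left, hv0W x hx, mul_zero]
    have hJW : ∀ x ∈ W, J x ∈ W := by
      intro x hx
      refine hmemW _ ?_ ?_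
      · calc ⟪u0, J x⟫ = ⟪J u0, J (J x)⟫ := (hJo _ _).symm
          _ = ⟪v0, -x⟫ := by rw [hJ2, hv0]
          _ = 0 := by rw [inner_neg_right, hv0W x hx, neg_zero]
      · calc ⟪v0, J x⟫ = ⟪J u0, J x⟫ := by rw [hv0]
          _ = ⟪u0, x⟫ := hJo _ _
          _ = 0 := hu0W x hx
    set T' : W →ₗ[ℝ] W := T.restrict hTW with hT'
    set J' : W →ₗ[ℝ] W := J.restrict hJW with hJ'
    have hcoeT : ∀ w : W, ((T' w : W) : V) = T (w : V) := fun w => rfl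
    have hcoeJ : ∀ w : W, ((J' w : W) : V) = J (w : V) := fun w => rfl
    have hinnW : ∀ x y : W, ⟪x, y⟫ = ⟪(x : V), (y : V)⟫ := fun x y => rfl
    -- apply induction hypothesis on W
    obtain ⟨u', lam', hpos', heig', hon'⟩ :=
      ih W inferInstance inferInstance inferInstance hWdim T' J'
        (fun x y => by rw [hinnW, hinnW, hcoeT, hcoeT, hTsym])
        (fun x hx => by
          rw [hinnW, hcoeT]
          exact hTpos _ (by simpa using hx))
        (fun x y => by rw [hinnW, hinnW, hcoeJ, hcoeJ, hJo])
        (fun x => by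
          apply Subtype.ext
          rw [hcoeJ]
          show (J ((J' x : W) : V)) = _
          rw [hcoeJ, hJ2]; rfl)
        (fun x => by
          apply Subtype.ext
          rw [hcoeT]
          show (T ((J' (T' x) : W) : V)) = _
          rw [hcoeJ, hcoeT, hTJT, hcoeJ])
    -- assemble
    refine ⟨Fin.cons u0 (fun j => (u' j : V)), Fin.cons μ lam', ?_, ?_, ?_⟩
    · intro j
      refine Fin.cases ?_ ?_ j
      · simpa using hμpos
      · intro i; simpa using hpos' i
    · intro j
      refine Fin.cases ?_ ?_ j
      · simpa using hTu0
      · intro i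
        simp only [Fin.cons_succ]
        rw [← hcoeT, heig' i]
        rfl
    · intro p q
      obtain ⟨pi, pk⟩ := p
      obtain ⟨qi, qk⟩ := q
      -- the vector at a successor index lies in W
      have hEW : ∀ (j : Fin n) (k : Fin 2),
          (if k = 0 then ((u' j : V)) else J ((u' j : V)))
            = ((if k = 0 then u' j else J' (u' j) : W) : V) := by
        intro j k
        split <;> simp [hcoeJ]
      rcases Fin.eq_zero_or_eq_succ pi with rfl | ⟨i, rfl⟩ <;>
        rcases Fin.eq_zero_or_eq_succ qi with rfl | ⟨j, rfl⟩
      · -- both zero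
        fin_cases pk <;> fin_cases qk <;>
          simp [Fin.cons_zero, hu0norm, huv, hvu, hvv, Prod.ext_iff, hu0n, (show ‖J u0‖ = 1 from hv0n),
            (show ⟪u0, J u0⟫ = 0 from huv), (show ⟪J u0, u0⟫ = 0 from hvu)]
      · -- p zero, q successor
        simp only [Fin.cons_zero, Fin.cons_succ]
        rw [hEW j qk]
        have hmem : ((if qk = 0 then u' j else J' (u' j) : W) : V) ∈ W :=
          Submodule.coe_mem _
        have hne : ¬ (((0 : Fin (n+1)), pk) = (Fin.succ j, qk)) := by
          simp [Prod.ext_iff, (Fin.succ_ne_zero j).symm]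
        rw [if_neg hne]
        fin_cases pk
        · exact hu0W _ hmem
        · rw [show (J u0) = v0 from rfl]; exact hv0W _ hmem
      · -- p successor, q zero
        simp only [Fin.cons_zero, Fin.cons_succ]
        rw [hEW i pk]
        have hmem : ((if pk = 0 then u' i else J' (u' i) : W) : V) ∈ W :=
          Submodule.coe_mem _
        have hne : ¬ ((Fin.succ i, pk) = ((0 : Fin (n+1)), qk)) := by
          simp [Prod.ext_iff, Fin.succ_ne_zero i]
        rw [if_neg hne]
        fin_cases qk
        · rw [real_inner_comm]; exact hu0W _ hmem
        · rw [real_inner_comm, show (J u0) = v0 from rfl]; exact hv0W _ hmem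
      · -- both successors
        simp only [Fin.cons_succ]
        rw [hEW i pk, hEW j qk, ← hinnW]
        have := hon' (i, pk) (j, qk)
        simp only at this
        have heq : ((Fin.succ i, pk) = (Fin.succ j, qk)) ↔ ((i, pk) = (j, qk)) := by
          simp [Prod.ext_iff, Fin.succ_inj]
        rw [show (if (Fin.succ i, pk) = (Fin.succ j, qk) then (1:ℝ) else 0)
            = (if (i, pk) = (j, qk) then (1:ℝ) else 0) by simp [heq]]
        convert this using 2

/-- **Bloch–Messiah decomposition**: any symplectic matrix `S ∈ Sp(2N,ℝ)` can
be written as `S = O' ⬝ (⊕_j exp(r_j Z)) ⬝ O` with `O, O'` symplectic and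
orthogonal. -/
theorem bloch_messiah (N : ℕ) (hN : 0 < N)
    (S : Matrix (Fin N × Fin 2) (Fin N × Fin 2) ℝ)
    (hS : S * Omega N * Sᵀ = Omega N) :
    ∃ (O O' : Matrix (Fin N × Fin 2) (Fin N × Fin 2) ℝ) (r : Fin N → ℝ),
      O * Omega N * Oᵀ = Omega N ∧ O' * Omega N * O'ᵀ = Omega N ∧
      Oᵀ * O = 1 ∧ O'ᵀ * O' = 1 ∧
      S = O' * squeezerBlock N r * O := by
  classical
  have hΩΩt := omega_mul_transpose N
  have hΩt := omega_transpose N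
  have hΩtΩ : (Omega N)ᵀ * Omega N = 1 := mul_eq_one_comm.mp hΩΩt
  -- S is invertible with inverse Ω Sᵀ Ωᵀ
  have hSr : S * (Omega N * Sᵀ * (Omega N)ᵀ) = 1 := by
    calc S * (Omega N * Sᵀ * (Omega N)ᵀ) = (S * Omega N * Sᵀ) * (Omega N)ᵀ := by
          simp only [Matrix.mul_assoc]
      _ = 1 := by rw [hS, hΩΩt]
  have hSl : (Omega N * Sᵀ * (Omega N)ᵀ) * S = 1 := mul_eq_one_comm.mp hSr
  have hSt : Sᵀ * ((Omega N)ᵀ * S) = (Omega N)ᵀ := by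
    calc Sᵀ * ((Omega N)ᵀ * S)
        = ((Omega N)ᵀ * Omega N) * (Sᵀ * ((Omega N)ᵀ * S)) := by
          rw [hΩtΩ, Matrix.one_mul]
      _ = (Omega N)ᵀ * ((Omega N * Sᵀ * (Omega N)ᵀ) * S) := by
          simp only [Matrix.mul_assoc]
      _ = (Omega N)ᵀ := by rw [hSl, Matrix.mul_one]
  have hSΩtSt : S * ((Omega N)ᵀ * Sᵀ) = (Omega N)ᵀ := by
    have h := congrArg Matrix.transpose hS
    simp only [Matrix.transpose_mul] at h
    calc S * ((Omega N)ᵀ * Sᵀ) = Sᵀᵀ * ((Omega N)ᵀ * Sᵀ) := by rw [Matrix.transpose_transpose]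
      _ = (Omega N)ᵀ := by rw [← Matrix.mul_assoc]; rw [← Matrix.mul_assoc] at h; exact h
  set A := S * Sᵀ with hAdef
  have hAsym : Aᵀ = A := by
    rw [hAdef, Matrix.transpose_mul, Matrix.transpose_transpose]
  have hAJA : A * (Omega N)ᵀ * A = (Omega N)ᵀ := by
    rw [Matrix.mul_assoc]
    calc A * ((Omega N)ᵀ * A) = S * ((Sᵀ * ((Omega N)ᵀ * S)) * Sᵀ) := by
          rw [hAdef]; simp only [Matrix.mul_assoc]
      _ = S * ((Omega N)ᵀ * Sᵀ) := by rw [hSt]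
      _ = (Omega N)ᵀ := hSΩtSt
  -- move to Euclidean space
  set T : EuclideanSpace ℝ (Fin N × Fin 2) →ₗ[ℝ] EuclideanSpace ℝ (Fin N × Fin 2) :=
    Matrix.toEuclideanLin A with hTdef
  set Jop : EuclideanSpace ℝ (Fin N × Fin 2) →ₗ[ℝ] EuclideanSpace ℝ (Fin N × Fin 2) :=
    Matrix.toEuclideanLin (Omega N)ᵀ with hJdef
  have hip : ∀ x y : EuclideanSpace ℝ (Fin N × Fin 2), ⟪x, y⟫ = ∑ i, x i * y i := fun x y => by
    simp [PiLp.inner_apply, RCLike.inner_apply, mul_comm]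
  have hdim : Module.finrank ℝ (EuclideanSpace ℝ (Fin N × Fin 2)) = 2 * N := by
    simp [finrank_euclideanSpace, Fintype.card_prod, mul_comm]
  have hTsymE : ∀ x y : EuclideanSpace ℝ (Fin N × Fin 2), ⟪T x, y⟫ = ⟪x, T y⟫ := by
    intro x y
    rw [hip, hip]
    show (A *ᵥ x) ⬝ᵥ (y : (Fin N × Fin 2) → ℝ) = (x : (Fin N × Fin 2) → ℝ) ⬝ᵥ (A *ᵥ y)
    rw [Matrix.dotProduct_mulVec, ← Matrix.mulVec_transpose, hAsym]
  have hTposE : ∀ x : EuclideanSpace ℝ (Fin N × Fin 2), x ≠ 0 → 0 < ⟪T x, x⟫ := by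
    intro x hx
    rw [hip]
    show 0 < (A *ᵥ x) ⬝ᵥ (x : (Fin N × Fin 2) → ℝ)
    have hy : (Sᵀ *ᵥ (x : (Fin N × Fin 2) → ℝ)) ≠ 0 := by
      intro h0
      apply hx
      have h1 : (Omega N * Sᵀ * (Omega N)ᵀ)ᵀ *ᵥ (Sᵀ *ᵥ (x : (Fin N × Fin 2) → ℝ))
          = (x : (Fin N × Fin 2) → ℝ) := by
        rw [Matrix.mulVec_mulVec, ← Matrix.transpose_mul, hSr, Matrix.transpose_one,
          Matrix.one_mulVec]
      rw [h0, Matrix.mulVec_zero] at h1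
      exact WithLp.ofLp_injective 2 (funext fun i => (congrFun h1 i).symm)
    have h2 : (A *ᵥ (x : (Fin N × Fin 2) → ℝ)) ⬝ᵥ (x : (Fin N × Fin 2) → ℝ)
        = (Sᵀ *ᵥ (x : (Fin N × Fin 2) → ℝ)) ⬝ᵥ (Sᵀ *ᵥ (x : (Fin N × Fin 2) → ℝ)) := by
      rw [hAdef, ← Matrix.mulVec_mulVec, dotProduct_comm, Matrix.dotProduct_mulVec,
        ← Matrix.mulVec_transpose]
    rw [h2]
    obtain ⟨i, hi⟩ := Function.ne_iff.mp hy
    exact Finset.sum_pos' (fun j _ => mul_self_nonneg _)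
      ⟨i, Finset.mem_univ i, mul_self_pos.mpr hi⟩
  have hJoE : ∀ x y : EuclideanSpace ℝ (Fin N × Fin 2), ⟪Jop x, Jop y⟫ = ⟪x, y⟫ := by
    intro x y
    rw [hip, hip]
    show ((Omega N)ᵀ *ᵥ x) ⬝ᵥ ((Omega N)ᵀ *ᵥ (y : (Fin N × Fin 2) → ℝ))
      = (x : (Fin N × Fin 2) → ℝ) ⬝ᵥ (y : (Fin N × Fin 2) → ℝ)
    rw [Matrix.dotProduct_mulVec, Matrix.vecMul_transpose, Matrix.mulVec_mulVec, hΩΩt,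
      Matrix.one_mulVec]
  have hΩ2 : Omega N * Omega N = -1 := by
    have h := hΩΩt
    rw [hΩt, Matrix.mul_neg] at h
    exact neg_eq_iff_eq_neg.mp h
  have hΩt2 : (Omega N)ᵀ * (Omega N)ᵀ = -1 := by
    rw [hΩt, Matrix.neg_mul, Matrix.mul_neg, neg_neg, hΩ2]
  have hJ2E : ∀ x : EuclideanSpace ℝ (Fin N × Fin 2), Jop (Jop x) = -x := by
    intro x
    have h : (Omega N)ᵀ *ᵥ ((Omega N)ᵀ *ᵥ (x : (Fin N × Fin 2) → ℝ))
        = -(x : (Fin N × Fin 2) → ℝ) := by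
      rw [Matrix.mulVec_mulVec, hΩt2, Matrix.neg_mulVec, Matrix.one_mulVec]
    exact WithLp.ofLp_injective 2 (funext fun i => congrFun h i)
  have hTJTE : ∀ x : EuclideanSpace ℝ (Fin N × Fin 2), T (Jop (T x)) = Jop x := by
    intro x
    have h : A *ᵥ ((Omega N)ᵀ *ᵥ (A *ᵥ (x : (Fin N × Fin 2) → ℝ)))
        = (Omega N)ᵀ *ᵥ (x : (Fin N × Fin 2) → ℝ) := by
      rw [Matrix.mulVec_mulVec, Matrix.mulVec_mulVec, hAJA]
    exact WithLp.ofLp_injective 2 (funext fun i => congrFun h i)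
  obtain ⟨u, lam, hpos, heig, hon⟩ :=
    bm_core N (EuclideanSpace ℝ (Fin N × Fin 2)) inferInstance inferInstance inferInstance
      hdim T Jop hTsymE hTposE hJoE hJ2E hTJTE
  -- eigen data for the paired eigenvectors
  set evec : (Fin N × Fin 2) → EuclideanSpace ℝ (Fin N × Fin 2) :=
    fun q => if q.2 = 0 then u q.1 else Jop (u q.1) with hevec
  set d : (Fin N × Fin 2) → ℝ := fun q => if q.2 = 0 then lam q.1 else (lam q.1)⁻¹ with hddef
  have hon' : ∀ p q : Fin N × Fin 2, ⟪evec p, evec q⟫ = if p = q then 1 else 0 := hon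
  have heig2 : ∀ j, T (Jop (u j)) = (lam j)⁻¹ • Jop (u j) := by
    intro j
    have h1 := hTJTE (u j)
    rw [heig j, LinearMap.map_smul, LinearMap.map_smul] at h1
    have hne := ne_of_gt (hpos j)
    calc T (Jop (u j)) = (lam j)⁻¹ • (lam j • T (Jop (u j))) := by
          rw [smul_smul, inv_mul_cancel₀ hne, one_smul]
      _ = (lam j)⁻¹ • Jop (u j) := by rw [h1]
  have heigvec : ∀ q, T (evec q) = d q • evec q := by
    intro q
    obtain ⟨j, k⟩ := q
    rcases bm_fin2cases k with rfl | rfl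
    · simpa [hevec, hddef] using heig j
    · simpa [hevec, hddef] using heig2 j
  -- the orthogonal symplectic matrix O'
  set O' : Matrix (Fin N × Fin 2) (Fin N × Fin 2) ℝ :=
    Matrix.of (fun p q => evec q p) with hO'def
  have hkey : ∀ p q : Fin N × Fin 2,
      ∑ i, evec p i * evec q i = if p = q then 1 else 0 := by
    intro p q
    rw [← hip]
    exact hon' p q
  have hO'orth : O'ᵀ * O' = 1 := by
    ext p q
    rw [Matrix.mul_apply, Matrix.one_apply]
    have h1 : ∑ i, O'ᵀ p i * O' i q = ∑ i, evec p i * evec q i := rfl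
    rw [h1, hkey p q]
  have hO'O'T : O' * O'ᵀ = 1 := mul_eq_one_comm.mp hO'orth
  have hAO' : A * O' = O' * Matrix.diagonal d := by
    ext p q
    have h1 : (A * O') p q = T (evec q) p := by
      rw [Matrix.mul_apply]; rfl
    have h2 : (O' * Matrix.diagonal d) p q = evec q p * d q := Matrix.mul_diagonal _ _ _ _
    rw [h1, h2, heigvec q]
    show d q * evec q p = evec q p * d q
    exact mul_comm _ _
  have hA2 : A = O' * Matrix.diagonal d * O'ᵀ := by
    calc A = A * (O' * O'ᵀ) := by rw [hO'O'T, Matrix.mul_one]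
      _ = (A * O') * O'ᵀ := by rw [← Matrix.mul_assoc A O' O'ᵀ]
      _ = O' * Matrix.diagonal d * O'ᵀ := by rw [hAO']
  -- Ω acting on the eigenvectors
  have hmv0 : ∀ j : Fin N, Omega N *ᵥ (evec (j, 0) : (Fin N × Fin 2) → ℝ)
      = -(evec (j, 1) : (Fin N × Fin 2) → ℝ) := by
    intro j
    show Omega N *ᵥ (u j : (Fin N × Fin 2) → ℝ) = -((Omega N)ᵀ *ᵥ (u j : (Fin N × Fin 2) → ℝ))
    rw [hΩt, Matrix.neg_mulVec, neg_neg]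
  have hmv1 : ∀ j : Fin N, Omega N *ᵥ (evec (j, 1) : (Fin N × Fin 2) → ℝ)
      = (evec (j, 0) : (Fin N × Fin 2) → ℝ) := by
    intro j
    show Omega N *ᵥ ((Omega N)ᵀ *ᵥ (u j : (Fin N × Fin 2) → ℝ))
      = (u j : (Fin N × Fin 2) → ℝ)
    rw [Matrix.mulVec_mulVec, hΩΩt, Matrix.one_mulVec]
  have hO'symp' : O'ᵀ * (Omega N * O') = Omega N := by
    ext p q
    have hsum : (O'ᵀ * (Omega N * O')) p q
        = ∑ i, evec p i * (Omega N *ᵥ (evec q : (Fin N × Fin 2) → ℝ)) i := by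
      rw [Matrix.mul_apply]; rfl
    rw [hsum]
    obtain ⟨j, k⟩ := q
    obtain ⟨pi, pk⟩ := p
    rcases bm_fin2cases k with rfl | rfl
    · rw [hmv0 j]
      have h2 : ∑ i, evec (pi, pk) i * (-(evec (j, 1) : (Fin N × Fin 2) → ℝ)) i
          = -(if (pi, pk) = ((j : Fin N), (1 : Fin 2)) then (1:ℝ) else 0) := by
        rw [← hkey (pi, pk) (j, 1), ← Finset.sum_neg_distrib]
        congr 1
        funext i
        show evec (pi, pk) i * (-(evec (j, 1) i)) = -(evec (pi, pk) i * evec (j, 1) i)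
        ring
      rw [h2]
      rcases bm_fin2cases pk with rfl | rfl <;> by_cases h : pi = j <;>
        simp [omega_apply, Prod.ext_iff, h]
    · rw [hmv1 j]
      rw [hkey (pi, pk) (j, 0)]
      rcases bm_fin2cases pk with rfl | rfl <;> by_cases h : pi = j <;>
        simp [omega_apply, Prod.ext_iff, h]
  have hO'sympT : O'ᵀ * Omega N * O' = Omega N := by
    rw [Matrix.mul_assoc]; exact hO'symp'
  have hO'symp : O' * Omega N * O'ᵀ = Omega N := by
    conv_lhs => rw [← hO'symp']
    rw [← Matrix.mul_assoc, ← Matrix.mul_assoc, hO'O'T, Matrix.one_mul, Matrix.mul_assoc,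
      hO'O'T, Matrix.mul_one]
  -- the squeezing parameters
  set r : Fin N → ℝ := fun j => Real.log (lam j) / 2 with hrdef
  have hr2 : ∀ j, r j + r j = Real.log (lam j) := fun j => by rw [hrdef]; exact add_halves _
  have hdd : Matrix.diagonal d = squeezerBlock N r * squeezerBlock N r := by
    rw [sq_mul]
    unfold squeezerBlock
    rw [Matrix.diagonal_eq_diagonal_iff]
    intro p
    simp only [hddef]
    have hadd : (r + r) p.1 = Real.log (lam p.1) := hr2 p.1
    split_ifs
    · rw [hadd, Real.exp_log (hpos p.1)]
    · rw [hadd, Real.exp_neg, Real.exp_log (hpos p.1)]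
  have hDinv : squeezerBlock N r * squeezerBlock N (-r) = 1 := by
    rw [sq_mul, add_neg_cancel, sq_zero]
  have hDinv' : squeezerBlock N (-r) * squeezerBlock N r = 1 := by
    rw [sq_mul, neg_add_cancel, sq_zero]
  -- the matrix O
  have hSdec : S = O' * squeezerBlock N r * (squeezerBlock N (-r) * O'ᵀ * S) := by
    simp only [← Matrix.mul_assoc]
    rw [Matrix.mul_assoc O' (squeezerBlock N r) (squeezerBlock N (-r)), hDinv,
      Matrix.mul_one, hO'O'T, Matrix.one_mul]
  have h1 : (O' * squeezerBlock N (-r) * squeezerBlock N (-r) * O'ᵀ) * A = 1 := by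
    rw [hA2, hdd]
    simp only [← Matrix.mul_assoc]
    rw [Matrix.mul_assoc (O' * squeezerBlock N (-r) * squeezerBlock N (-r)) O'ᵀ O',
      hO'orth, Matrix.mul_one,
      Matrix.mul_assoc (O' * squeezerBlock N (-r)) (squeezerBlock N (-r)) (squeezerBlock N r),
      hDinv', Matrix.mul_one,
      Matrix.mul_assoc O' (squeezerBlock N (-r)) (squeezerBlock N r), hDinv', Matrix.mul_one]
    exact hO'O'T
  have h2 : (O' * squeezerBlock N (-r) * squeezerBlock N (-r) * O'ᵀ) * S * Sᵀ = 1 := by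
    rw [Matrix.mul_assoc]; exact h1
  have h3 : Sᵀ * ((O' * squeezerBlock N (-r) * squeezerBlock N (-r) * O'ᵀ) * S) = 1 :=
    mul_eq_one_comm.mp h2
  have hOorth : (squeezerBlock N (-r) * O'ᵀ * S)ᵀ * (squeezerBlock N (-r) * O'ᵀ * S) = 1 := by
    simp only [Matrix.transpose_mul, Matrix.transpose_transpose, sq_transpose]
    simp only [← Matrix.mul_assoc]
    simp only [← Matrix.mul_assoc] at h3
    exact h3
  have hOsymp : (squeezerBlock N (-r) * O'ᵀ * S) * Omega N
      * (squeezerBlock N (-r) * O'ᵀ * S)ᵀ = Omega N := by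
    simp only [Matrix.transpose_mul, Matrix.transpose_transpose, sq_transpose]
    have h4 := sq_symp N (-r)
    rw [sq_transpose] at h4
    calc squeezerBlock N (-r) * O'ᵀ * S * Omega N * (Sᵀ * (O' * squeezerBlock N (-r)))
        = squeezerBlock N (-r) * (O'ᵀ * (S * Omega N * Sᵀ) * O') * squeezerBlock N (-r) := by
          simp only [Matrix.mul_assoc]
      _ = squeezerBlock N (-r) * (O'ᵀ * Omega N * O') * squeezerBlock N (-r) := by rw [hS]
      _ = squeezerBlock N (-r) * Omega N * squeezerBlock N (-r) := by
          rw [hO'sympT, Matrix.mul_assoc]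
      _ = Omega N := h4
  exact ⟨squeezerBlock N (-r) * O'ᵀ * S, O', r, hOsymp, hO'symp, hOorth, hO'orth, hSdec⟩
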